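/- Let K be a complete discretely valued field with normalized valuation v, residue field of cardinality 2, and v(2) = 4, and let τ be a uniformizer. If v(τ⁴ + 2) = 7, then −1 is a sum of 4 fourth powers in K. -/

import Mathlib

private lemma wt_forall_top {x : WithTop ℤ}
    (h : ∀ n : ℕ, ((n : ℤ) : WithTop ℤ) ≤ x) : x = ⊤ := by
  induction x using WithTop.recTopCoe with
  | top => rfl
  | coe m =>
    exfalso
    have := h (m.toNat + 1)
    rw [WithTop.coe_le_coe] at this
    omega

private lemma wt_shift {a : WithTop ℤ} {b c : ℤ}
    (h : ((c : ℤ) : WithTop ℤ) ≤ a + ((b : ℤ) : WithTop ℤ)) :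
    ((c - b : ℤ) : WithTop ℤ) ≤ a := by
  induction a using WithTop.recTopCoe with
  | top => exact le_top
  | coe m =>
    rw [← WithTop.coe_add, WithTop.coe_le_coe] at h
    exact WithTop.coe_le_coe.mpr (by omega)

private lemma wt_add_self_eq_zero {a : WithTop ℤ} (h : a + a = 0) : a = 0 := by
  induction a using WithTop.recTopCoe with
  | top => simp at h
  | coe m =>
    rw [← WithTop.coe_add] at h
    have hm : m + m = 0 := by exact_mod_cast h
    have : m = 0 := by omega
    simp [this]

/-- Newton iteration for square roots. -/
private def newtonSeq {K : Type*} [Field K] (u : K) : ℕ → K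
  | 0 => 1
  | n + 1 => (newtonSeq u n ^ 2 + u) / (2 * newtonSeq u n)

section val

variable {K : Type*} [Field K] (v : K → WithTop ℤ)
  (hv0 : ∀ x : K, v x = ⊤ ↔ x = 0)
  (hvmul : ∀ x y : K, v (x * y) = v x + v y)
  (hvadd : ∀ x y : K, min (v x) (v y) ≤ v (x + y))

include hv0 hvmul in
private lemma v_one : v 1 = 0 := by
  have h := hvmul 1 1
  rw [one_mul] at h
  have hne : v (1 : K) ≠ ⊤ := fun ht => one_ne_zero ((hv0 1).1 ht)
  obtain ⟨m, hv1⟩ := WithTop.ne_top_iff_exists.mp hne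
  rw [← hv1, ← WithTop.coe_add] at h
  have hm : m = m + m := by exact_mod_cast h
  have hm0 : m = 0 := by omega
  rw [← hv1, hm0]
  simp

include hv0 hvmul in
private lemma v_neg (x : K) : v (-x) = v x := by
  have hm1 : v (-1 : K) = 0 := by
    have h := hvmul (-1 : K) (-1)
    rw [neg_mul_neg, one_mul, v_one v hv0 hvmul] at h
    exact wt_add_self_eq_zero h.symm
  rw [show (-x : K) = (-1) * x by ring, hvmul, hm1, zero_add]

include hv0 hvmul hvadd in
private lemma v_add_eq_left {x y : K} (h : v x < v y) : v (x + y) = v x := by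
  refine le_antisymm ?_ ?_
  · by_contra hlt
    push_neg at hlt
    have h2 := hvadd (x + y) (-y)
    rw [add_neg_cancel_right, v_neg v hv0 hvmul] at h2
    exact absurd h2 (not_le.mpr (lt_min hlt h))
  · calc v x = min (v x) (v y) := (min_eq_left h.le).symm
      _ ≤ v (x + y) := hvadd x y

include hvadd in
private lemma v_add_ge {x y : K} {c : WithTop ℤ} (hx : c ≤ v x) (hy : c ≤ v y) :
    c ≤ v (x + y) :=
  le_trans (le_min hx hy) (hvadd x y)

include hv0 hvmul hvadd in
private lemma v_sub_ge {x y : K} {c : WithTop ℤ} (hx : c ≤ v x) (hy : c ≤ v y) :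
    c ≤ v (x - y) := by
  rw [sub_eq_add_neg]
  exact v_add_ge v hvadd hx (by rwa [v_neg v hv0 hvmul])

include hv0 hvmul in
private lemma v_sub_comm (x y : K) : v (x - y) = v (y - x) := by
  rw [show x - y = -(y - x) by ring, v_neg v hv0 hvmul]

include hvmul in
private lemma v_div (a b : K) (hb : b ≠ 0) : v (a / b) + v b = v a := by
  rw [← hvmul, div_mul_cancel₀ a hb]

include hv0 hvmul in
private lemma v_pow (x : K) (c : ℤ) (hx : v x = (c : WithTop ℤ)) :
    ∀ n : ℕ, v (x ^ n) = (((n : ℤ) * c : ℤ) : WithTop ℤ)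
  | 0 => by simp [v_one v hv0 hvmul]
  | n + 1 => by
    rw [pow_succ, hvmul, v_pow x c hx n, hx, ← WithTop.coe_add]
    congr 1
    push_cast
    ring

include hv0 hvmul hvadd in
private lemma hensel_sqrt
    (hcomplete : ∀ f : ℕ → K,
      (∀ n : ℕ, ∃ N : ℕ, ∀ i ≥ N, ∀ j ≥ N, ((n : ℤ) : WithTop ℤ) ≤ v (f i - f j)) →
      ∃ L : K, ∀ n : ℕ, ∃ N : ℕ, ∀ i ≥ N, ((n : ℤ) : WithTop ℤ) ≤ v (f i - L))
    (h2 : v 2 = ((4 : ℤ) : WithTop ℤ))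
    (m : ℤ) (hm : 9 ≤ m) (u : K) (hu : ((m : ℤ) : WithTop ℤ) ≤ v (u - 1)) :
    ∃ w : K, w ^ 2 = u ∧ ((m - 4 : ℤ) : WithTop ℤ) ≤ v (w - 1) := by
  have hvzero : v (0 : K) = ⊤ := (hv0 0).mpr rfl
  have h2K : (2 : K) ≠ 0 := by
    intro hh
    rw [(hv0 2).2 hh] at h2
    exact (WithTop.coe_ne_top h2.symm)
  set x := newtonSeq u with hxdef
  have hu9 : ((9 : ℤ) : WithTop ℤ) ≤ v (u - 1) :=
    le_trans (WithTop.coe_le_coe.mpr hm) hu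
  -- main invariant
  have inv : ∀ n : ℕ, (((5 : ℤ) : WithTop ℤ) ≤ v (x n - 1)) ∧
      (((9 + (n : ℤ) : ℤ) : WithTop ℤ) ≤ v (x n ^ 2 - u)) := by
    intro n
    induction n with
    | zero =>
      constructor
      · show ((5 : ℤ) : WithTop ℤ) ≤ v ((1 : K) - 1)
        rw [sub_self, hvzero]; exact le_top
      · show ((9 + ((0 : ℕ) : ℤ) : ℤ) : WithTop ℤ) ≤ v ((1 : K) ^ 2 - u)
        rw [one_pow, v_sub_comm v hv0 hvmul]
        refine le_trans (WithTop.coe_le_coe.mpr ?_) hu9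
        push_cast
        try omega
    | succ n ih =>
      obtain ⟨ih1, ih2⟩ := ih
      have hxu : v (x n) = 0 := by
        have hre : x n = 1 + (x n - 1) := by ring
        have hlt : v (1 : K) < v (x n - 1) := by
          rw [v_one v hv0 hvmul]
          refine lt_of_lt_of_le ?_ ih1
          exact_mod_cast (by norm_num : (0 : ℤ) < 5)
        rw [hre, v_add_eq_left v hv0 hvmul hvadd hlt, v_one v hv0 hvmul]
      have hxne : x n ≠ 0 := by
        intro hh
        rw [(hv0 (x n)).2 hh] at hxu
        exact (by simp : (⊤ : WithTop ℤ) ≠ 0) hxu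
      have hden : (2 * x n) ≠ 0 := mul_ne_zero h2K hxne
      have hvden : v (2 * x n) = ((4 : ℤ) : WithTop ℤ) := by
        rw [hvmul, h2, hxu, add_zero]
      have heq : x (n + 1) = (x n ^ 2 + u) / (2 * x n) := rfl
      have hdiff : x (n + 1) - x n = (u - x n ^ 2) / (2 * x n) := by
        rw [heq]; field_simp; ring
      have hnum : ((9 + (n : ℤ) : ℤ) : WithTop ℤ) ≤ v (u - x n ^ 2) := by
        rw [v_sub_comm v hv0 hvmul]; exact ih2
      have hstep : (((5 + (n : ℤ)) : ℤ) : WithTop ℤ) ≤ v (x (n + 1) - x n) := by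
        rw [hdiff]
        have hd := v_div v hvmul (u - x n ^ 2) (2 * x n) hden
        rw [hvden] at hd
        have h' : ((9 + (n : ℤ) : ℤ) : WithTop ℤ) ≤
            v ((u - x n ^ 2) / (2 * x n)) + ((4 : ℤ) : WithTop ℤ) := by
          rw [hd]; exact hnum
        have h'' := wt_shift h'
        rwa [show (9 + (n : ℤ)) - 4 = 5 + (n : ℤ) by ring] at h''
      constructor
      · have hre : x (n + 1) - 1 = (x (n + 1) - x n) + (x n - 1) := by ring
        rw [hre]
        refine v_add_ge v hvadd (le_trans (WithTop.coe_le_coe.mpr ?_) hstep) ih1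
        omega
      · have hdiff2 : x (n + 1) ^ 2 - u = (x n ^ 2 - u) ^ 2 / ((2 * x n) ^ 2) := by
          rw [heq]; field_simp; ring
        have hden2 : (2 * x n) ^ 2 ≠ 0 := pow_ne_zero _ hden
        have hvden2 : v ((2 * x n) ^ 2) = ((8 : ℤ) : WithTop ℤ) := by
          rw [v_pow v hv0 hvmul (2 * x n) 4 hvden 2]; norm_num
        have hnum2 : (((18 + 2 * (n : ℤ)) : ℤ) : WithTop ℤ) ≤ v ((x n ^ 2 - u) ^ 2) := by
          rw [show ((x n ^ 2 - u) ^ 2) = (x n ^ 2 - u) * (x n ^ 2 - u) by ring, hvmul]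
          calc (((18 + 2 * (n : ℤ)) : ℤ) : WithTop ℤ)
              = ((9 + (n : ℤ) : ℤ) : WithTop ℤ) + ((9 + (n : ℤ) : ℤ) : WithTop ℤ) := by
                rw [← WithTop.coe_add]; congr 1; ring
            _ ≤ _ := add_le_add ih2 ih2
        have hd := v_div v hvmul ((x n ^ 2 - u) ^ 2) ((2 * x n) ^ 2) hden2
        rw [hvden2] at hd
        have h' : (((18 + 2 * (n : ℤ)) : ℤ) : WithTop ℤ) ≤
            v ((x n ^ 2 - u) ^ 2 / ((2 * x n) ^ 2)) + ((8 : ℤ) : WithTop ℤ) := by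
          rw [hd]; exact hnum2
        have h'' := wt_shift h'
        rw [hdiff2]
        refine le_trans (WithTop.coe_le_coe.mpr ?_) h''
        push_cast; omega
  have hunit : ∀ n : ℕ, v (x n) = 0 := by
    intro n
    have hre : x n = 1 + (x n - 1) := by ring
    have hlt : v (1 : K) < v (x n - 1) := by
      rw [v_one v hv0 hvmul]
      refine lt_of_lt_of_le ?_ (inv n).1
      exact_mod_cast (by norm_num : (0 : ℤ) < 5)
    rw [hre, v_add_eq_left v hv0 hvmul hvadd hlt, v_one v hv0 hvmul]
  have hxne : ∀ n : ℕ, x n ≠ 0 := by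
    intro n hh
    have := hunit n
    rw [(hv0 (x n)).2 hh] at this
    exact (by simp : (⊤ : WithTop ℤ) ≠ 0) this
  have hstep : ∀ n : ℕ, (((5 + (n : ℤ)) : ℤ) : WithTop ℤ) ≤ v (x (n + 1) - x n) := by
    intro n
    have hden : (2 * x n) ≠ 0 := mul_ne_zero h2K (hxne n)
    have hvden : v (2 * x n) = ((4 : ℤ) : WithTop ℤ) := by
      rw [hvmul, h2, hunit n, add_zero]
    have heq : x (n + 1) = (x n ^ 2 + u) / (2 * x n) := rfl
    have hdiff : x (n + 1) - x n = (u - x n ^ 2) / (2 * x n) := by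
      rw [heq]; field_simp; ring
    rw [hdiff]
    have hd := v_div v hvmul (u - x n ^ 2) (2 * x n) hden
    rw [hvden] at hd
    have h' : ((9 + (n : ℤ) : ℤ) : WithTop ℤ) ≤
        v ((u - x n ^ 2) / (2 * x n)) + ((4 : ℤ) : WithTop ℤ) := by
      rw [hd, v_sub_comm v hv0 hvmul]; exact (inv n).2
    have h'' := wt_shift h'
    rwa [show (9 + (n : ℤ)) - 4 = 5 + (n : ℤ) by ring] at h''
  have tele : ∀ i j : ℕ, i ≤ j → (((5 + (i : ℤ)) : ℤ) : WithTop ℤ) ≤ v (x j - x i) := by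
    intro i j hij
    induction j, hij using Nat.le_induction with
    | base => rw [sub_self, hvzero]; exact le_top
    | succ j hij ih =>
      have hre : x (j + 1) - x i = (x (j + 1) - x j) + (x j - x i) := by ring
      rw [hre]
      exact v_add_ge v hvadd
        (le_trans (WithTop.coe_le_coe.mpr (by omega)) (hstep j)) ih
  have cauchy : ∀ n : ℕ, ∃ N : ℕ, ∀ i ≥ N, ∀ j ≥ N,
      ((n : ℤ) : WithTop ℤ) ≤ v (x i - x j) := by
    intro n
    refine ⟨n, fun i hi j hj => ?_⟩
    rcases le_total j i with hji | hij
    · exact le_trans (WithTop.coe_le_coe.mpr (by omega)) (tele j i hji)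
    · rw [v_sub_comm v hv0 hvmul]
      exact le_trans (WithTop.coe_le_coe.mpr (by omega)) (tele i j hij)
  obtain ⟨L, hL⟩ := hcomplete x cauchy
  have hL1 : ((5 : ℤ) : WithTop ℤ) ≤ v (L - 1) := by
    obtain ⟨N, hN⟩ := hL 5
    have h1 : ((5 : ℤ) : WithTop ℤ) ≤ v (x N - L) := by exact_mod_cast hN N le_rfl
    have hre : L - 1 = (L - x N) + (x N - 1) := by ring
    rw [hre]
    exact v_add_ge v hvadd (by rwa [v_sub_comm v hv0 hvmul]) (inv N).1
  have hLunit : v L = 0 := by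
    have hre : L = 1 + (L - 1) := by ring
    have hlt : v (1 : K) < v (L - 1) := by
      rw [v_one v hv0 hvmul]
      refine lt_of_lt_of_le ?_ hL1
      exact_mod_cast (by norm_num : (0 : ℤ) < 5)
    rw [hre, v_add_eq_left v hv0 hvmul hvadd hlt, v_one v hv0 hvmul]
  have hL2 : L ^ 2 = u := by
    have hall : ∀ n : ℕ, ((n : ℤ) : WithTop ℤ) ≤ v (L ^ 2 - u) := by
      intro n
      obtain ⟨N, hN⟩ := hL n
      set i := max N n with hidef
      have h1 : ((n : ℤ) : WithTop ℤ) ≤ v (L - x i) := by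
        rw [v_sub_comm v hv0 hvmul]
        exact hN i (le_max_left _ _)
      have h0 : (0 : WithTop ℤ) ≤ v (L + x i) := by
        refine le_trans ?_ (hvadd L (x i))
        simp [hLunit, hunit i]
      have hre : L ^ 2 - u = (L - x i) * (L + x i) + (x i ^ 2 - u) := by ring
      rw [hre]
      refine v_add_ge v hvadd ?_ ?_
      · rw [hvmul]
        calc ((n : ℤ) : WithTop ℤ) = ((n : ℤ) : WithTop ℤ) + 0 := (add_zero _).symm
          _ ≤ v (L - x i) + v (L + x i) := add_le_add h1 h0
      · refine le_trans (WithTop.coe_le_coe.mpr ?_) (inv i).2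
        have := le_max_right N n
        omega
    exact sub_eq_zero.mp ((hv0 _).1 (wt_forall_top hall))
  refine ⟨L, hL2, ?_⟩
  have hfac : (L - 1) * (L + 1) = u - 1 := by rw [← hL2]; ring
  have hL1v : v (L + 1) = ((4 : ℤ) : WithTop ℤ) := by
    have hlt : v (2 : K) < v (L - 1) := by
      rw [h2]
      exact lt_of_lt_of_le (WithTop.coe_lt_coe.mpr (by norm_num)) hL1
    rw [show L + 1 = 2 + (L - 1) by ring, v_add_eq_left v hv0 hvmul hvadd hlt, h2]
  have hprod := hvmul (L - 1) (L + 1)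
  rw [hfac, hL1v] at hprod
  have h' : ((m : ℤ) : WithTop ℤ) ≤ v (L - 1) + ((4 : ℤ) : WithTop ℤ) := by
    rw [← hprod]; exact hu
  exact wt_shift h'

end val

/-- Let `K` be a complete discretely valued field with normalized (surjective)
valuation `v`, residue field of cardinality 2, and `v 2 = 4`, and let `τ` be a
uniformizer. If `v (τ⁴ + 2) = 7`, then `-1` is a sum of 4 fourth powers in `K`.
Completeness is expressed by the convergence of Cauchy sequences with respect
to `v`. -/
theorem stmt_15 {K : Type*} [Field K] (v : K → WithTop ℤ)
    (hv0 : ∀ x : K, v x = ⊤ ↔ x = 0)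
    (hvmul : ∀ x y : K, v (x * y) = v x + v y)
    (hvadd : ∀ x y : K, min (v x) (v y) ≤ v (x + y))
    (hsurj : ∀ n : ℤ, ∃ x : K, v x = (n : WithTop ℤ))
    (hres : ∀ x : K, v x = 0 → 0 < v (x - 1))
    (hcomplete : ∀ f : ℕ → K,
      (∀ n : ℕ, ∃ N : ℕ, ∀ i ≥ N, ∀ j ≥ N, ((n : ℤ) : WithTop ℤ) ≤ v (f i - f j)) →
      ∃ L : K, ∀ n : ℕ, ∃ N : ℕ, ∀ i ≥ N, ((n : ℤ) : WithTop ℤ) ≤ v (f i - L))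
    (h2 : v 2 = ((4 : ℤ) : WithTop ℤ))
    (τ : K) (hτ : v τ = ((1 : ℤ) : WithTop ℤ))
    (h : v (τ ^ 4 + 2) = ((7 : ℤ) : WithTop ℤ)) :
    ∃ x₁ x₂ x₃ x₄ : K, x₁ ^ 4 + x₂ ^ 4 + x₃ ^ 4 + x₄ ^ 4 = -1 := by
  have hvne1 : v (-1 : K) = 0 := by
    rw [show (-1 : K) = -(1 : K) by ring, v_neg v hv0 hvmul, v_one v hv0 hvmul]
  have hv3 : v (3 : K) = 0 := by
    have hlt : v (1 : K) < v (2 : K) := by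
      rw [v_one v hv0 hvmul, h2]
      exact_mod_cast (by norm_num : (0 : ℤ) < 4)
    rw [show (3 : K) = 1 + 2 by norm_num, v_add_eq_left v hv0 hvmul hvadd hlt,
      v_one v hv0 hvmul]
  have hv4 : v (4 : K) = ((8 : ℤ) : WithTop ℤ) := by
    rw [show (4 : K) = 2 * 2 by norm_num, hvmul, h2, ← WithTop.coe_add]
    norm_num
  have hv6 : v (6 : K) = ((4 : ℤ) : WithTop ℤ) := by
    rw [show (6 : K) = 2 * 3 by norm_num, hvmul, h2, hv3, add_zero]
  have hτ4 : v (τ ^ 4) = ((4 : ℤ) : WithTop ℤ) := by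
    rw [v_pow v hv0 hvmul τ 1 hτ 4]; norm_num
  have hτ9 : v (τ ^ 9) = ((9 : ℤ) : WithTop ℤ) := by
    rw [v_pow v hv0 hvmul τ 1 hτ 9]; norm_num
  have hτ10 : v (τ ^ 10) = ((10 : ℤ) : WithTop ℤ) := by
    rw [v_pow v hv0 hvmul τ 1 hτ 10]; norm_num
  have hτ11 : v (τ ^ 11) = ((11 : ℤ) : WithTop ℤ) := by
    rw [v_pow v hv0 hvmul τ 1 hτ 11]; norm_num
  have hε2 : v ((τ ^ 4 + 2) ^ 2) = ((14 : ℤ) : WithTop ℤ) := by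
    rw [v_pow v hv0 hvmul (τ ^ 4 + 2) 7 h 2]; norm_num
  have key : (τ ^ 3 + τ ^ 2) ^ 4 + 4 =
      (τ ^ 4 + 2) ^ 2 + τ ^ 4 * (τ ^ 4 + 2) ^ 2 - 4 * (τ ^ 4 * (τ ^ 4 + 2)) +
        4 * τ ^ 11 + 6 * τ ^ 10 + 4 * τ ^ 9 := by ring
  have hT2 : v (τ ^ 4 * (τ ^ 4 + 2) ^ 2) = ((18 : ℤ) : WithTop ℤ) := by
    rw [hvmul, hτ4, hε2, ← WithTop.coe_add]; norm_num
  have hT3 : v (4 * (τ ^ 4 * (τ ^ 4 + 2))) = ((19 : ℤ) : WithTop ℤ) := by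
    rw [hvmul, hvmul, hv4, hτ4, h, ← WithTop.coe_add, ← WithTop.coe_add]; norm_num
  have hT4 : v (4 * τ ^ 11) = ((19 : ℤ) : WithTop ℤ) := by
    rw [hvmul, hv4, hτ11, ← WithTop.coe_add]; norm_num
  have hT5 : v (6 * τ ^ 10) = ((14 : ℤ) : WithTop ℤ) := by
    rw [hvmul, hv6, hτ10, ← WithTop.coe_add]; norm_num
  have hT6 : v (4 * τ ^ 9) = ((17 : ℤ) : WithTop ℤ) := by
    rw [hvmul, hv4, hτ9, ← WithTop.coe_add]; norm_num
  have hA : ((14 : ℤ) : WithTop ℤ) ≤ v ((τ ^ 3 + τ ^ 2) ^ 4 + 4) := by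
    rw [key]
    refine v_add_ge v hvadd (v_add_ge v hvadd (v_add_ge v hvadd
      (v_sub_ge v hv0 hvmul hvadd (v_add_ge v hvadd ?_ ?_) ?_) ?_) ?_) ?_
    · rw [hε2]
    · rw [hT2]; exact WithTop.coe_le_coe.mpr (by norm_num)
    · rw [hT3]; exact WithTop.coe_le_coe.mpr (by norm_num)
    · rw [hT4]; exact WithTop.coe_le_coe.mpr (by norm_num)
    · rw [hT5]
    · rw [hT6]; exact WithTop.coe_le_coe.mpr (by norm_num)
  set b : K := (τ ^ 3 + τ ^ 2) ^ 4 + 3 with hbdef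
  have hb : v b = 0 := by
    have hlt : v (-1 : K) < v ((τ ^ 3 + τ ^ 2) ^ 4 + 4) := by
      rw [hvne1]
      exact lt_of_lt_of_le (by exact_mod_cast (by norm_num : (0 : ℤ) < 14)) hA
    rw [show b = -1 + ((τ ^ 3 + τ ^ 2) ^ 4 + 4) by rw [hbdef]; ring,
      v_add_eq_left v hv0 hvmul hvadd hlt, hvne1]
  have hbne : b ≠ 0 := by
    intro hh
    rw [(hv0 b).2 hh] at hb
    exact (by simp : (⊤ : WithTop ℤ) ≠ 0) hb
  set u : K := -b⁻¹ with hudef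
  have hub : b * (u - 1) = -((τ ^ 3 + τ ^ 2) ^ 4 + 4) := by
    rw [hudef, mul_sub, mul_neg, mul_inv_cancel₀ hbne, hbdef]
    ring
  have hvu : ((13 : ℤ) : WithTop ℤ) ≤ v (u - 1) := by
    have h14 : ((14 : ℤ) : WithTop ℤ) ≤ v (b * (u - 1)) := by
      rw [hub, show -((τ ^ 3 + τ ^ 2) ^ 4 + 4) = -(((τ ^ 3 + τ ^ 2) ^ 4 + 4)) by ring,
        v_neg v hv0 hvmul]
      exact hA
    rw [hvmul, hb, zero_add] at h14
    exact le_trans (WithTop.coe_le_coe.mpr (by norm_num)) h14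
  obtain ⟨w, hw2, hw1⟩ := hensel_sqrt v hv0 hvmul hvadd hcomplete h2 13
    (by norm_num) u hvu
  have hw1' : ((9 : ℤ) : WithTop ℤ) ≤ v (w - 1) := by
    refine le_trans (WithTop.coe_le_coe.mpr (by norm_num)) hw1
  obtain ⟨t, ht2, -⟩ := hensel_sqrt v hv0 hvmul hvadd hcomplete h2 9
    (le_refl _) w hw1'
  have ht4 : t ^ 4 = u := by
    rw [show t ^ 4 = (t ^ 2) ^ 2 by ring, ht2, hw2]
  refine ⟨(τ ^ 3 + τ ^ 2) * t, t, t, t, ?_⟩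
  have hsum : ((τ ^ 3 + τ ^ 2) * t) ^ 4 + t ^ 4 + t ^ 4 + t ^ 4 = t ^ 4 * b := by
    rw [hbdef]; ring
  rw [hsum, ht4, hudef, neg_mul, inv_mul_cancel₀ hbne]
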